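/- arXiv:1802.08229 — 3 statements merged into one kernel-verified Lean document; each statement's English description precedes it below -/
import Mathlib

section
/- For fixed α ∈ (0, 1), the upper α/2 quantile of the standard t-distribution is strictly decreasing in the degrees of freedom: if 1 ≤ d₁ < d₂ then t_{d₂, α/2} < t_{d₁, α/2}. -/
open MeasureTheory Set

/-- Density of the standard t-distribution with `d` degrees of freedom. -/
noncomputable def stdTPdf (d : ℝ) (x : ℝ) : ℝ :=
  Real.Gamma ((d + 1) / 2) / (Real.sqrt (d * Real.pi) * Real.Gamma (d / 2))
    * (1 + x ^ 2 / d) ^ (-((d + 1) / 2))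

/-- The standard t-distribution with `d` degrees of freedom as a measure on `ℝ`. -/
noncomputable def stdT (d : ℝ) : Measure ℝ :=
  (volume : Measure ℝ).withDensity fun x => ENNReal.ofReal (stdTPdf d x)

open Filter
open scoped Real Topology

namespace TAux

noncomputable def g (d x : ℝ) : ℝ := (1 + x ^ 2 / d) ^ (-((d + 1) / 2))

lemma base_pos {d : ℝ} (hd : 0 < d) (x : ℝ) : 0 < 1 + x ^ 2 / d := by positivity

lemma g_pos {d : ℝ} (hd : 0 < d) (x : ℝ) : 0 < g d x :=
  Real.rpow_pos_of_pos (base_pos hd x) _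

lemma g_continuous {d : ℝ} (hd : 0 < d) : Continuous (g d) := by
  apply Continuous.rpow_const
  · continuity
  · intro x; exact Or.inl (base_pos hd x).ne'

lemma g_eq_integral {d : ℝ} (hd : 0 < d) (x : ℝ) :
    g d x = (Real.Gamma ((d+1)/2))⁻¹ *
      ∫ t in Ioi (0:ℝ), t ^ ((d+1)/2 - 1) * Real.exp (-((1 + x ^ 2 / d) * t)) := by
  have hp : 0 < (d+1)/2 := by linarith
  have hΓ : 0 < Real.Gamma ((d+1)/2) := Real.Gamma_pos_of_pos hp
  rw [Real.integral_rpow_mul_exp_neg_mul_Ioi hp (base_pos hd x)]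
  rw [one_div, Real.inv_rpow (base_pos hd x).le, ← Real.rpow_neg (base_pos hd x).le]
  unfold g
  field_simp

lemma integrableOn_kernel {s r : ℝ} (hs : -1 < s) (hr : 0 < r) :
    IntegrableOn (fun t : ℝ => t ^ s * Real.exp (-(r * t))) (Ioi 0) := by
  have := integrableOn_rpow_mul_exp_neg_mul_rpow hs zero_lt_one hr
  refine this.congr_fun (fun t _ => ?_) measurableSet_Ioi
  simp only [Real.rpow_one, neg_mul]

lemma lintegral_g {d : ℝ} (hd : 0 < d) :
    ∫⁻ x, ENNReal.ofReal (g d x) =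
      ENNReal.ofReal (Real.sqrt (d * Real.pi) * Real.Gamma (d / 2) / Real.Gamma ((d+1)/2)) := by
  have hp : 0 < (d+1)/2 := by linarith
  have hΓ : 0 < Real.Gamma ((d+1)/2) := Real.Gamma_pos_of_pos hp
  have hq : 0 < d/2 := by linarith
  -- step 1: pointwise representation
  have step1 : ∀ x : ℝ, ENNReal.ofReal (g d x) = ENNReal.ofReal (Real.Gamma ((d+1)/2))⁻¹ *
      ∫⁻ t in Ioi (0:ℝ), ENNReal.ofReal (t ^ ((d+1)/2 - 1) * Real.exp (-((1 + x ^ 2 / d) * t))) := by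
    intro x
    rw [g_eq_integral hd x, ENNReal.ofReal_mul (by positivity),
      ofReal_integral_eq_lintegral_ofReal (integrableOn_kernel (by linarith) (base_pos hd x))
        ((ae_restrict_iff' measurableSet_Ioi).mpr (Filter.Eventually.of_forall
          fun t ht => by have : 0 < t := ht; positivity))]
  simp_rw [step1]
  rw [lintegral_const_mul' _ _ (by simp)]
  -- step 2: swap
  have hswap : ∫⁻ x : ℝ, ∫⁻ t in Ioi (0:ℝ),
        ENNReal.ofReal (t ^ ((d+1)/2 - 1) * Real.exp (-((1 + x ^ 2 / d) * t)))
      = ∫⁻ t in Ioi (0:ℝ), ∫⁻ x : ℝ,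
        ENNReal.ofReal (t ^ ((d+1)/2 - 1) * Real.exp (-((1 + x ^ 2 / d) * t))) := by
    apply lintegral_lintegral_swap
    apply Measurable.aemeasurable
    apply ENNReal.measurable_ofReal.comp
    fun_prop
  rw [hswap]
  -- step 3: inner gaussian integral
  have step3 : ∀ t ∈ Ioi (0:ℝ), (∫⁻ x : ℝ,
        ENNReal.ofReal (t ^ ((d+1)/2 - 1) * Real.exp (-((1 + x ^ 2 / d) * t))))
      = ENNReal.ofReal (Real.sqrt (d * Real.pi) * (t ^ (d/2 - 1) * Real.exp (-t))) := by
    intro t ht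
    rw [mem_Ioi] at ht
    have key : ∀ x : ℝ, t ^ ((d+1)/2 - 1) * Real.exp (-((1 + x ^ 2 / d) * t))
        = (t ^ ((d+1)/2 - 1) * Real.exp (-t)) * Real.exp (-(t/d) * x ^ 2) := by
      intro x
      rw [mul_assoc, ← Real.exp_add]
      ring_nf
    simp_rw [key, ENNReal.ofReal_mul (mul_nonneg (Real.rpow_nonneg ht.le _) (Real.exp_nonneg _))]
    rw [lintegral_const_mul' _ _ ENNReal.ofReal_ne_top,
      ← ofReal_integral_eq_lintegral_ofReal (integrable_exp_neg_mul_sq (by positivity))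
        (Filter.Eventually.of_forall fun x => (Real.exp_nonneg _)),
      integral_gaussian, ← ENNReal.ofReal_mul (by positivity)]
    congr 1
    have h1 : Real.sqrt (π / (t/d)) = Real.sqrt (d * π) * t ^ (-(1:ℝ)/2) := by
      rw [show π / (t/d) = d * π / t by field_simp,
        Real.sqrt_eq_rpow, Real.sqrt_eq_rpow,
        Real.div_rpow (by positivity) ht.le,
        show (-(1:ℝ)/2) = -(1/2 : ℝ) by ring, Real.rpow_neg ht.le, div_eq_mul_inv]
    rw [h1]
    have h2 : t ^ ((d+1)/2 - 1) * t ^ (-(1:ℝ)/2) = t ^ (d/2 - 1) := by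
      rw [← Real.rpow_add ht]; ring_nf
    calc t ^ ((d+1)/2 - 1) * Real.exp (-t) * (Real.sqrt (d*π) * t ^ (-(1:ℝ)/2))
        = Real.sqrt (d*π) * ((t ^ ((d+1)/2 - 1) * t ^ (-(1:ℝ)/2)) * Real.exp (-t)) := by ring
      _ = _ := by rw [h2]
  rw [setLIntegral_congr_fun_ae measurableSet_Ioi (Filter.Eventually.of_forall step3)]
  -- step 4: Gamma integral
  have step4 : ∫⁻ t in Ioi (0:ℝ), ENNReal.ofReal (Real.sqrt (d * π) * (t ^ (d/2 - 1) * Real.exp (-t)))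
      = ENNReal.ofReal (Real.sqrt (d * π)) * ENNReal.ofReal (Real.Gamma (d/2)) := by
    have hint : ∫ t in Ioi (0:ℝ), t ^ (d/2 - 1) * Real.exp (-t) = Real.Gamma (d/2) := by
      have := Real.integral_rpow_mul_exp_neg_mul_Ioi hq one_pos
      simp only [one_mul, one_div, inv_one, Real.one_rpow] at this
      rw [← this]
    simp_rw [ENNReal.ofReal_mul (Real.sqrt_nonneg _)]
    rw [lintegral_const_mul' _ _ ENNReal.ofReal_ne_top,
      ← ofReal_integral_eq_lintegral_ofReal (integrableOn_kernel (s := d/2 - 1) (by linarith) one_pos |>.congr_fun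
        (fun t _ => by simp only [one_mul]) measurableSet_Ioi)
        ((ae_restrict_iff' measurableSet_Ioi).mpr (Filter.Eventually.of_forall
          fun t ht => by have : 0 < t := ht; positivity)),
      hint]
  rw [step4, ← ENNReal.ofReal_mul (Real.sqrt_nonneg _),
    ← ENNReal.ofReal_mul (inv_nonneg.mpr hΓ.le)]
  congr 1
  field_simp


lemma integrable_g {d : ℝ} (hd : 0 < d) : Integrable (g d) := by
  refine ⟨(g_continuous hd).aestronglyMeasurable, ?_⟩
  rw [hasFiniteIntegral_iff_ofReal (Filter.Eventually.of_forall fun x => (g_pos hd x).le),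
    lintegral_g hd]
  exact ENNReal.ofReal_lt_top

lemma integral_g {d : ℝ} (hd : 0 < d) :
    ∫ x, g d x = Real.sqrt (d * π) * Real.Gamma (d/2) / Real.Gamma ((d+1)/2) := by
  have hΓq := Real.Gamma_pos_of_pos (show (0:ℝ) < d/2 by linarith)
  have hΓp := Real.Gamma_pos_of_pos (show (0:ℝ) < (d+1)/2 by linarith)
  rw [integral_eq_lintegral_of_nonneg_ae (Filter.Eventually.of_forall fun x => (g_pos hd x).le)
    (g_continuous hd).aestronglyMeasurable, lintegral_g hd,
    ENNReal.toReal_ofReal (by positivity)]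

noncomputable def hfac (v : ℝ) : ℝ := (v + 1/2)^2 / (v * (v + 1))

lemma hfac_pos {v : ℝ} (hv : 0 < v) : 0 < hfac v := by
  unfold hfac; positivity

lemma one_le_hfac {v : ℝ} (hv : 0 < v) : 1 ≤ hfac v := by
  rw [hfac, le_div_iff₀ (by positivity)]; nlinarith

lemma hfac_lt {s t : ℝ} (hs : 0 < s) (hst : s < t) : hfac t < hfac s := by
  have ht : 0 < t := hs.trans hst
  rw [hfac, hfac, div_lt_div_iff₀ (by positivity) (by positivity)]
  nlinarith [sq_nonneg (s*t), sq_nonneg (s+t), mul_pos hs (hs.trans hst)]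

noncomputable def Rr (u : ℝ) : ℝ := Real.Gamma u * Real.Gamma (u+1) / Real.Gamma (u+1/2)^2

noncomputable def Qp (u : ℝ) (n : ℕ) : ℝ :=
  Real.GammaSeq u n * Real.GammaSeq (u+1) n / (Real.GammaSeq (u+1/2) n)^2

lemma Qp_eq_prod {u : ℝ} (hu : 0 < u) {n : ℕ} (hn : 1 ≤ n) :
    Qp u n = ∏ j ∈ Finset.range (n+1), hfac (u + j) := by
  have hN : (0:ℝ) < n := by exact_mod_cast hn
  have hA : ∀ c : ℝ, 0 < c → (0:ℝ) < ∏ j ∈ Finset.range (n+1), (c + j) := by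
    intro c hc
    exact Finset.prod_pos fun j _ => by positivity
  have hF : (0:ℝ) < (n.factorial : ℝ) := by exact_mod_cast n.factorial_pos
  have hpow : ((n:ℝ) ^ (u + 1/2 : ℝ))^2 = (n:ℝ) ^ (u:ℝ) * (n:ℝ) ^ (u+1 : ℝ) := by
    rw [sq, ← Real.rpow_add hN, ← Real.rpow_add hN]
    congr 1
    ring
  have key : Qp u n = (∏ j ∈ Finset.range (n+1), (u + 1/2 + j))^2 /
      ((∏ j ∈ Finset.range (n+1), ((u:ℝ) + j)) * (∏ j ∈ Finset.range (n+1), (u + 1 + j))) := by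
    rw [Qp, Real.GammaSeq, Real.GammaSeq, Real.GammaSeq]
    rw [div_pow, mul_pow, hpow]
    have h1 := (hA u hu).ne'
    have h2 := (hA (u+1) (by linarith)).ne'
    have h3 := (hA (u+1/2) (by linarith)).ne'
    field_simp
  rw [key]
  rw [← Finset.prod_pow, ← Finset.prod_mul_distrib, ← Finset.prod_div_distrib]
  refine Finset.prod_congr rfl fun j _ => ?_
  rw [hfac]
  ring

lemma tendsto_Qp {u : ℝ} (hu : 0 < u) : Tendsto (Qp u) atTop (𝓝 (Rr u)) := by
  have h3 : Real.Gamma (u+1/2) ^ 2 ≠ 0 := by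
    have := Real.Gamma_pos_of_pos (show 0 < u + 1/2 by linarith)
    positivity
  exact (((Real.GammaSeq_tendsto_Gamma u).mul (Real.GammaSeq_tendsto_Gamma (u+1))).div
    ((Real.GammaSeq_tendsto_Gamma (u+1/2)).pow 2) h3)

lemma Rr_pos {u : ℝ} (hu : 0 < u) : 0 < Rr u := by
  have h1 := Real.Gamma_pos_of_pos hu
  have h2 := Real.Gamma_pos_of_pos (show (0:ℝ) < u + 1 by linarith)
  have h3 := Real.Gamma_pos_of_pos (show (0:ℝ) < u + 1/2 by linarith)
  rw [Rr]; positivity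

lemma Rr_strictAnti {s t : ℝ} (hs : 0 < s) (hst : s < t) : Rr t < Rr s := by
  have ht : 0 < t := hs.trans hst
  have hc1 : 1 < hfac s / hfac t :=
    (one_lt_div (hfac_pos ht)).mpr (hfac_lt hs hst)
  -- key inequality along the sequence
  have hQ : ∀ n : ℕ, 1 ≤ n → (hfac s / hfac t) * Qp t n ≤ Qp s n := by
    intro n hn
    rw [Qp_eq_prod hs hn, Qp_eq_prod ht hn]
    have hsucc : ∀ c : ℝ, 0 < c → ∏ j ∈ Finset.range (n+1), hfac (c + j)
        = (∏ j ∈ Finset.range n, hfac (c + (j+1))) * hfac c := by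
      intro c hc
      have := Finset.prod_range_succ' (fun j => hfac (c + j)) n
      simpa using this
    rw [hsucc s hs, hsucc t ht]
    have hprodle : ∏ j ∈ Finset.range n, hfac (t + (j+1)) ≤
        ∏ j ∈ Finset.range n, hfac (s + (j+1)) := by
      apply Finset.prod_le_prod
      · intro j _; exact (hfac_pos (by positivity)).le
      · intro j _; exact (hfac_lt (by positivity) (by linarith)).le
    calc (hfac s / hfac t) * ((∏ j ∈ Finset.range n, hfac (t + (j+1))) * hfac t)
        = hfac s * ∏ j ∈ Finset.range n, hfac (t + (j+1)) := by
          have habs : ∀ a b P : ℝ, b ≠ 0 → a / b * (P * b) = a * P := by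
            intro a b P hb; field_simp
          exact habs _ _ _ (hfac_pos ht).ne'
      _ ≤ hfac s * ∏ j ∈ Finset.range n, hfac (s + (j+1)) := by
          apply mul_le_mul_of_nonneg_left hprodle (hfac_pos hs).le
      _ = (∏ j ∈ Finset.range n, hfac (s + (j+1))) * hfac s := by ring
  have hlim : (hfac s / hfac t) * Rr t ≤ Rr s := by
    refine le_of_tendsto_of_tendsto (((tendsto_Qp ht).const_mul _)) (tendsto_Qp hs) ?_
    filter_upwards [eventually_ge_atTop 1] with n hn using hQ n hn
  nlinarith [Rr_pos ht, Rr_pos hs]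

noncomputable def Cn (d : ℝ) : ℝ :=
  Real.Gamma ((d + 1) / 2) / (Real.sqrt (d * Real.pi) * Real.Gamma (d / 2))

lemma stdTPdf_eq (d x : ℝ) : stdTPdf d x = Cn d * g d x := rfl

lemma Cn_pos {d : ℝ} (hd : 0 < d) : 0 < Cn d := by
  have h1 : 0 < Real.Gamma ((d+1)/2) := Real.Gamma_pos_of_pos (by linarith)
  have h2 : 0 < Real.Gamma (d/2) := Real.Gamma_pos_of_pos (by linarith)
  have h3 : 0 < Real.sqrt (d * π) := Real.sqrt_pos.mpr (by positivity)
  exact div_pos h1 (by positivity)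

lemma pdf_pos {d : ℝ} (hd : 0 < d) (x : ℝ) : 0 < stdTPdf d x :=
  mul_pos (Cn_pos hd) (g_pos hd x)

lemma pdf_continuous {d : ℝ} (hd : 0 < d) : Continuous (stdTPdf d) :=
  continuous_const.mul (g_continuous hd)

lemma pdf_integrable {d : ℝ} (hd : 0 < d) : Integrable (stdTPdf d) :=
  (integrable_g hd).const_mul _

lemma pdf_integral_one {d : ℝ} (hd : 0 < d) : ∫ x, stdTPdf d x = 1 := by
  have h1 : 0 < Real.Gamma ((d+1)/2) := Real.Gamma_pos_of_pos (by linarith)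
  have h2 : 0 < Real.Gamma (d/2) := Real.Gamma_pos_of_pos (by linarith)
  have h3 : 0 < Real.sqrt (d * π) := Real.sqrt_pos.mpr (by positivity)
  simp_rw [stdTPdf_eq, integral_const_mul, integral_g hd, Cn]
  field_simp

lemma stdT_apply {d : ℝ} (hd : 0 < d) {s : Set ℝ} (hs : MeasurableSet s) :
    stdT d s = ENNReal.ofReal (∫ x in s, stdTPdf d x) := by
  rw [stdT, withDensity_apply _ hs,
    ofReal_integral_eq_lintegral_ofReal ((pdf_integrable hd).integrableOn)
      (Filter.Eventually.of_forall fun x => (pdf_pos hd x).le)]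

lemma pdf_even {d : ℝ} (x : ℝ) : stdTPdf d (-x) = stdTPdf d x := by
  simp [stdTPdf, neg_pow]

lemma integral_Ioi_zero {d : ℝ} (hd : 0 < d) : ∫ x in Ioi (0:ℝ), stdTPdf d x = 1/2 := by
  have hsym : ∫ x in Iic (0:ℝ), stdTPdf d x = ∫ x in Ioi (0:ℝ), stdTPdf d x := by
    rw [show (0:ℝ) = -0 by norm_num, ← integral_comp_neg_Ioi]
    simp_rw [pdf_even]
    norm_num
  have hsplit : (∫ x in Iic (0:ℝ), stdTPdf d x) + ∫ x in Ioi (0:ℝ), stdTPdf d x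
      = ∫ x, stdTPdf d x := intervalIntegral.integral_Iic_add_Ioi (pdf_integrable hd).integrableOn
        (pdf_integrable hd).integrableOn
  rw [pdf_integral_one hd, hsym] at hsplit
  linarith

lemma tail_anti {d : ℝ} (hd : 0 < d) {a b : ℝ} (hab : a ≤ b) :
    ∫ x in Ioi b, stdTPdf d x ≤ ∫ x in Ioi a, stdTPdf d x := by
  apply setIntegral_mono_set (pdf_integrable hd).integrableOn
    (Filter.Eventually.of_forall fun x => (pdf_pos hd x).le)
  exact HasSubset.Subset.eventuallyLE (Ioi_subset_Ioi hab)

lemma tail_strict_anti {d : ℝ} (hd : 0 < d) {a b : ℝ} (hab : a < b) :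
    ∫ x in Ioi b, stdTPdf d x < ∫ x in Ioi a, stdTPdf d x := by
  have hunion : Ioc a b ∪ Ioi b = Ioi a := Ioc_union_Ioi_eq_Ioi hab.le
  have hdisj : Disjoint (Ioc a b) (Ioi b) := Ioc_disjoint_Ioi le_rfl
  have hsplit : ∫ x in Ioi a, stdTPdf d x
      = (∫ x in Ioc a b, stdTPdf d x) + ∫ x in Ioi b, stdTPdf d x := by
    rw [← hunion, setIntegral_union hdisj measurableSet_Ioi
      (pdf_integrable hd).integrableOn (pdf_integrable hd).integrableOn]
  have hpos : 0 < ∫ x in Ioc a b, stdTPdf d x := by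
    rw [setIntegral_pos_iff_support_of_nonneg_ae
      (Filter.Eventually.of_forall fun x => (pdf_pos hd x).le) (pdf_integrable hd).integrableOn]
    have : Function.support (stdTPdf d) = univ := by
      ext x; simp [Function.mem_support, (pdf_pos hd x).ne']
    rw [this, univ_inter]
    simp [hab]
  linarith

lemma Cn_sq {d : ℝ} (hd : 0 < d) : Cn d ^ 2 = 1 / (2 * π * Rr (d/2)) := by
  have hq : 0 < d/2 := by linarith
  have hΓq := Real.Gamma_pos_of_pos hq
  have hΓp := Real.Gamma_pos_of_pos (show (0:ℝ) < d/2 + 1/2 by linarith)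
  have hπ : 0 < π := Real.pi_pos
  have hsq : Real.sqrt (d*π)^2 = d*π := Real.sq_sqrt (by positivity)
  have hg1 : Real.Gamma (d/2 + 1) = (d/2) * Real.Gamma (d/2) := Real.Gamma_add_one hq.ne'
  have hp : (d+1)/2 = d/2 + 1/2 := by ring
  rw [Cn, Rr, div_pow, mul_pow, hsq, hg1, hp]
  rw [div_eq_div_iff (by positivity) (by positivity)]
  field_simp

lemma Cn_strictMono {d₁ d₂ : ℝ} (h1 : 0 < d₁) (h : d₁ < d₂) : Cn d₁ < Cn d₂ := by
  have hR := Rr_strictAnti (show (0:ℝ) < d₁/2 by linarith) (show d₁/2 < d₂/2 by linarith)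
  have hR1 := Rr_pos (show (0:ℝ) < d₁/2 by linarith)
  have hR2 := Rr_pos (show (0:ℝ) < d₂/2 by linarith)
  have hπ : 0 < π := Real.pi_pos
  have hsq : Cn d₁ ^ 2 < Cn d₂ ^ 2 := by
    rw [Cn_sq h1, Cn_sq (h1.trans h)]
    apply div_lt_div_of_pos_left one_pos (by positivity)
    nlinarith
  nlinarith [Cn_pos h1, Cn_pos (h1.trans h)]

/-- log-density as a function of `u = x²`. -/
noncomputable def φ (d u : ℝ) : ℝ := Real.log (Cn d) - ((d+1)/2) * Real.log (1 + u/d)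

lemma pdf_eq_exp {d : ℝ} (hd : 0 < d) (x : ℝ) : stdTPdf d x = Real.exp (φ d (x^2)) := by
  have hb : 0 < 1 + x^2/d := by positivity
  rw [φ, Real.exp_sub, Real.exp_log (Cn_pos hd), stdTPdf]
  rw [show Real.Gamma ((d + 1) / 2) / (Real.sqrt (d * Real.pi) * Real.Gamma (d / 2)) = Cn d from rfl]
  congr 1
  rw [Real.rpow_def_of_pos hb, ← Real.exp_neg]
  ring_nf

section cross

variable {d₁ d₂ : ℝ} (hd₁ : 1 ≤ d₁) (hd : d₁ < d₂)

noncomputable def ψ (d₁ d₂ u : ℝ) : ℝ := φ d₁ u - φ d₂ u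

include hd₁ hd

lemma ψ_hasDeriv (u : ℝ) (hu : 0 ≤ u) :
    HasDerivAt (ψ d₁ d₂) ((d₂+1)/(2*(d₂+u)) - (d₁+1)/(2*(d₁+u))) u := by
  have h1 : (0:ℝ) < d₁ := by linarith
  have h2 : (0:ℝ) < d₂ := by linarith
  have key : ∀ d : ℝ, 0 < d → HasDerivAt (fun v => Real.log (1 + v/d)) (1/(d+u)) u := by
    intro d hdp
    have hb : 0 < 1 + u/d := by positivity
    have h : HasDerivAt (fun v : ℝ => 1 + v/d) (1/d) u := ((hasDerivAt_id u).div_const d).const_add 1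
    have := h.log hb.ne'
    convert this using 1
    field_simp
  have e1 := ((key d₁ h1).const_mul ((d₁+1)/2)).const_sub (Real.log (Cn d₁))
  have e2 := ((key d₂ h2).const_mul ((d₂+1)/2)).const_sub (Real.log (Cn d₂))
  have H := e1.sub e2
  have heq : (d₂+1)/(2*(d₂+u)) - (d₁+1)/(2*(d₁+u))
      = -((d₁+1)/2 * (1/(d₁+u))) - -((d₂+1)/2 * (1/(d₂+u))) := by
    have ha : (0:ℝ) < d₁ + u := by linarith
    have hb : (0:ℝ) < d₂ + u := by linarith
    field_simp
    ring
  rw [heq]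
  exact H

lemma ψ_contOn : ContinuousOn (ψ d₁ d₂) (Ici 0) := by
  have h1 : (0:ℝ) < d₁ := by linarith
  have h2 : (0:ℝ) < d₂ := by linarith
  intro u hu
  exact ((ψ_hasDeriv hd₁ hd u hu).continuousAt).continuousWithinAt

lemma ψ_strictMonoOn : StrictMonoOn (ψ d₁ d₂) (Ici 1) := by
  have h1 : (0:ℝ) < d₁ := by linarith
  have h2 : (0:ℝ) < d₂ := by linarith
  apply strictMonoOn_of_deriv_pos (convex_Ici 1)
    ((ψ_contOn hd₁ hd).mono (Ici_subset_Ici.mpr zero_le_one))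
  intro u hu
  rw [interior_Ici] at hu
  have hu1 : (1:ℝ) < u := hu
  rw [(ψ_hasDeriv hd₁ hd u (by linarith)).deriv]
  rw [sub_pos, div_lt_div_iff₀ (by nlinarith : (0:ℝ) < 2*(d₁+u)) (by nlinarith : (0:ℝ) < 2*(d₂+u))]
  nlinarith
  
lemma ψ_strictAntiOn : StrictAntiOn (ψ d₁ d₂) (Icc 0 1) := by
  have h1 : (0:ℝ) < d₁ := by linarith
  have h2 : (0:ℝ) < d₂ := by linarith
  apply strictAntiOn_of_deriv_neg (convex_Icc 0 1)
    ((ψ_contOn hd₁ hd).mono Icc_subset_Ici_self)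
  intro u hu
  rw [interior_Icc] at hu
  rw [(ψ_hasDeriv hd₁ hd u hu.1.le).deriv]
  rw [sub_neg, div_lt_div_iff₀ (by nlinarith [hu.1] : (0:ℝ) < 2*(d₂+u))
    (by nlinarith [hu.1] : (0:ℝ) < 2*(d₁+u))]
  nlinarith [hu.1, hu.2]

lemma ψ_zero_neg : ψ d₁ d₂ 0 < 0 := by
  have h1 : (0:ℝ) < d₁ := by linarith
  simp only [ψ, φ, zero_div, add_zero, Real.log_one, mul_zero, sub_zero]
  have := Real.log_lt_log (Cn_pos h1) (Cn_strictMono h1 hd)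
  linarith

lemma ψ_tendsto : Tendsto (ψ d₁ d₂) atTop atTop := by
  have h1 : (0:ℝ) < d₁ := by linarith
  have h2 : (0:ℝ) < d₂ := by linarith
  -- lower bound
  have hlb : ∀ u : ℝ, 0 ≤ u → (Real.log (Cn d₁) - Real.log (Cn d₂)
      + ((d₁+1)/2) * Real.log (d₁/d₂)) + ((d₂+1)/2 - (d₁+1)/2) * Real.log (1 + u/d₂)
      ≤ ψ d₁ d₂ u := by
    intro u hu
    have hb1 : 0 < 1 + u/d₁ := by positivity
    have hb2 : 0 < 1 + u/d₂ := by positivity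
    have hkey : Real.log (d₁/d₂) + Real.log (1 + u/d₁) ≤ Real.log (1 + u/d₂) := by
      rw [← Real.log_mul (by positivity) hb1.ne']
      apply Real.log_le_log (by positivity)
      rw [div_mul_eq_mul_div, div_le_iff₀ (by positivity)]
      have : d₁ * (1 + u/d₁) = d₁ + u := by field_simp
      rw [this]
      have : (1 + u/d₂) * d₂ = d₂ + u := by field_simp
      rw [this]
      linarith
    simp only [ψ, φ]
    have hp1 : 0 < (d₁+1)/2 := by linarith
    nlinarith [hkey]
  apply tendsto_atTop_mono' atTop ?_ ?_
  · exact fun u => (Real.log (Cn d₁) - Real.log (Cn d₂)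
      + ((d₁+1)/2) * Real.log (d₁/d₂)) + ((d₂+1)/2 - (d₁+1)/2) * Real.log (1 + u/d₂)
  · filter_upwards [eventually_ge_atTop 0] with u hu using hlb u hu
  · apply tendsto_atTop_add_const_left
    apply Tendsto.const_mul_atTop (by linarith : (0:ℝ) < (d₂+1)/2 - (d₁+1)/2)
    apply Real.tendsto_log_atTop.comp
    apply tendsto_atTop_add_const_left
    exact tendsto_id.atTop_div_const h2

/-- The crossing point. -/
lemma exists_crossing : ∃ c : ℝ, 1 < c ∧ ψ d₁ d₂ c = 0 ∧
    (∀ u, 0 ≤ u → u < c → ψ d₁ d₂ u < 0) ∧ (∀ u, c < u → 0 < ψ d₁ d₂ u) := by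
  obtain ⟨u₀, hu₀1, hu₀pos⟩ : ∃ u₀ : ℝ, 1 < u₀ ∧ 0 < ψ d₁ d₂ u₀ := by
    have := ((ψ_tendsto hd₁ hd).eventually_gt_atTop 0).and (eventually_gt_atTop 1)
    obtain ⟨u₀, h⟩ := this.exists
    exact ⟨u₀, h.2, h.1⟩
  have hψ1 : ψ d₁ d₂ 1 < 0 := by
    have := ψ_strictAntiOn hd₁ hd (left_mem_Icc.mpr zero_le_one) (right_mem_Icc.mpr zero_le_one)
      zero_lt_one
    have h0 := ψ_zero_neg hd₁ hd
    linarith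
  have hsub : Icc (1:ℝ) u₀ ⊆ Ici 0 := fun x hx => le_trans zero_le_one hx.1
  have hIVT := intermediate_value_Ioo hu₀1.le ((ψ_contOn hd₁ hd).mono hsub)
  have h0mem : (0:ℝ) ∈ Ioo (ψ d₁ d₂ 1) (ψ d₁ d₂ u₀) := ⟨hψ1, hu₀pos⟩
  obtain ⟨c, hcmem, hceq⟩ := hIVT h0mem
  refine ⟨c, hcmem.1, hceq, ?_, ?_⟩
  · intro u hu0 huc
    rcases le_or_gt u 1 with h1 | h1
    · rcases eq_or_lt_of_le hu0 with h0 | h0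
      · rw [← h0]; exact ψ_zero_neg hd₁ hd
      · have := ψ_strictAntiOn hd₁ hd (left_mem_Icc.mpr zero_le_one) ⟨hu0, h1⟩ h0
        have h0n := ψ_zero_neg hd₁ hd
        linarith
    · have := ψ_strictMonoOn hd₁ hd (mem_Ici.mpr h1.le) (mem_Ici.mpr hcmem.1.le) huc
      linarith [hceq]
  · intro u hcu
    have := ψ_strictMonoOn hd₁ hd (mem_Ici.mpr hcmem.1.le) (mem_Ici.mpr (hcmem.1.le.trans hcu.le)) hcu
    linarith [hceq]

lemma tail_lt {t : ℝ} (ht : 0 < t) :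
    ∫ x in Ioi t, stdTPdf d₂ x < ∫ x in Ioi t, stdTPdf d₁ x := by
  have h1 : (0:ℝ) < d₁ := by linarith
  have h2 : (0:ℝ) < d₂ := by linarith
  obtain ⟨c, hc1, hceq, hneg, hpos⟩ := exists_crossing hd₁ hd
  have hc0 : (0:ℝ) < c := by linarith
  set b := Real.sqrt c with hb
  have hb0 : 0 < b := Real.sqrt_pos.mpr hc0
  have hgt : ∀ x : ℝ, b < x → stdTPdf d₂ x < stdTPdf d₁ x := by
    intro x hx
    rw [pdf_eq_exp h1, pdf_eq_exp h2]
    apply Real.exp_lt_exp.mpr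
    have hx2 : c < x^2 := (Real.sqrt_lt' (lt_trans hb0 hx)).mp hx
    have := hpos _ hx2
    simp only [ψ] at this; linarith
  have hlt : ∀ x : ℝ, 0 ≤ x → x < b → stdTPdf d₁ x < stdTPdf d₂ x := by
    intro x hx0 hxb
    rw [pdf_eq_exp h1, pdf_eq_exp h2]
    apply Real.exp_lt_exp.mpr
    have hx2 : x^2 < c := (Real.lt_sqrt hx0).mp hxb
    have := hneg _ (by positivity) hx2
    simp only [ψ] at this; linarith
  have hΔint : ∀ s : Set ℝ, IntegrableOn (fun x => stdTPdf d₁ x - stdTPdf d₂ x) s := fun s =>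
    ((pdf_integrable h1).sub (pdf_integrable h2)).integrableOn
  have hΔint' : ∀ s : Set ℝ, IntegrableOn (fun x => stdTPdf d₂ x - stdTPdf d₁ x) s := fun s =>
    ((pdf_integrable h2).sub (pdf_integrable h1)).integrableOn
  have key : 0 < ∫ x in Ioi t, (stdTPdf d₁ x - stdTPdf d₂ x) := by
    rcases le_or_gt b t with hbt | htb
    · rw [setIntegral_pos_iff_support_of_nonneg_ae ?_ (hΔint _)]
      · refine lt_of_lt_of_le ?_ (measure_mono (?_ :
          Ioi t ⊆ Function.support (fun x => stdTPdf d₁ x - stdTPdf d₂ x) ∩ Ioi t))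
        · rw [Real.volume_Ioi]; simp
        · intro x hx
          exact ⟨(sub_pos.mpr (hgt x (lt_of_le_of_lt hbt hx))).ne', hx⟩
      · rw [EventuallyLE, ae_restrict_iff' measurableSet_Ioi]
        exact Filter.Eventually.of_forall
          fun x hx => (sub_pos.mpr (hgt x (lt_of_le_of_lt hbt hx))).le
    · have hzero : ∫ x in Ioi (0:ℝ), (stdTPdf d₁ x - stdTPdf d₂ x) = 0 := by
        rw [integral_sub ((pdf_integrable h1).integrableOn) ((pdf_integrable h2).integrableOn),
          integral_Ioi_zero h1, integral_Ioi_zero h2]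
        ring
      have hsplit : ∫ x in Ioi (0:ℝ), (stdTPdf d₁ x - stdTPdf d₂ x)
          = (∫ x in Ioc (0:ℝ) t, (stdTPdf d₁ x - stdTPdf d₂ x))
            + ∫ x in Ioi t, (stdTPdf d₁ x - stdTPdf d₂ x) := by
        rw [← Ioc_union_Ioi_eq_Ioi ht.le, setIntegral_union (Ioc_disjoint_Ioi le_rfl)
          measurableSet_Ioi (hΔint _) (hΔint _)]
      have hIoc : 0 < ∫ x in Ioc (0:ℝ) t, (stdTPdf d₂ x - stdTPdf d₁ x) := by
        rw [setIntegral_pos_iff_support_of_nonneg_ae ?_ (hΔint' _)]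
        · refine lt_of_lt_of_le ?_ (measure_mono (?_ :
            Ioc 0 t ⊆ Function.support (fun x => stdTPdf d₂ x - stdTPdf d₁ x) ∩ Ioc 0 t))
          · rw [Real.volume_Ioc]
            simpa using ht
          · intro x hx
            exact ⟨(sub_pos.mpr (hlt x hx.1.le (lt_of_le_of_lt hx.2 htb))).ne', hx⟩
        · rw [EventuallyLE, ae_restrict_iff' measurableSet_Ioc]
          exact Filter.Eventually.of_forall
            fun x hx => (sub_pos.mpr (hlt x hx.1.le (lt_of_le_of_lt hx.2 htb))).le
      have hIoc' : ∫ x in Ioc (0:ℝ) t, (stdTPdf d₁ x - stdTPdf d₂ x) < 0 := by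
        have : ∫ x in Ioc (0:ℝ) t, (stdTPdf d₂ x - stdTPdf d₁ x)
            = - ∫ x in Ioc (0:ℝ) t, (stdTPdf d₁ x - stdTPdf d₂ x) := by
          rw [← integral_neg]
          congr 1; ext x; ring
        linarith [hIoc, this ▸ hIoc]
      linarith
  rw [integral_sub ((pdf_integrable h1).integrableOn) ((pdf_integrable h2).integrableOn)] at key
  linarith

end cross
end TAux

open TAux in
/-- For fixed `α ∈ (0,1)`, the upper `α/2` quantile of the standard t-distribution is
strictly decreasing in the degrees of freedom: if `1 ≤ d₁ < d₂` then
`t_{d₂, α/2} < t_{d₁, α/2}`. -/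
theorem t_quantile_strict_anti (α : ℝ) (hα : α ∈ Set.Ioo (0 : ℝ) 1)
    (d₁ d₂ : ℝ) (hd₁ : 1 ≤ d₁) (hd : d₁ < d₂) (t₁ t₂ : ℝ)
    (h₁ : stdT d₁ (Set.Ioi t₁) = ENNReal.ofReal (α / 2))
    (h₂ : stdT d₂ (Set.Ioi t₂) = ENNReal.ofReal (α / 2)) :
    t₂ < t₁ := by
  have h1 : (0:ℝ) < d₁ := by linarith
  have h2 : (0:ℝ) < d₂ := by linarith
  obtain ⟨hα0, hα1⟩ := hα
  have hE : ∀ d t : ℝ, 0 < d → stdT d (Set.Ioi t) = ENNReal.ofReal (α / 2) →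
      ∫ x in Ioi t, stdTPdf d x = α / 2 := by
    intro d t hdp hEq
    rw [stdT_apply hdp measurableSet_Ioi] at hEq
    exact (ENNReal.ofReal_eq_ofReal_iff
      (setIntegral_nonneg measurableSet_Ioi fun x _ => (pdf_pos hdp x).le)
      (by linarith)).mp hEq
  have E₁ := hE d₁ t₁ h1 h₁
  have E₂ := hE d₂ t₂ h2 h₂
  have ht₂ : 0 < t₂ := by
    by_contra hcon
    push_neg at hcon
    have := tail_anti h2 hcon
    rw [E₂, integral_Ioi_zero h2] at this
    linarith
  by_contra hcon
  push_neg at hcon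
  have hmono : ∫ x in Ioi t₂, stdTPdf d₁ x ≤ ∫ x in Ioi t₁, stdTPdf d₁ x := tail_anti h1 hcon
  have hcmp := tail_lt hd₁ hd ht₂
  rw [E₁] at hmono
  rw [E₂] at hcmp
  linarith
end

section
/- In the heteroscedastic mixed model Y_ij = μ_j + b_i + ε_ij with ε_ij independent N(0, σ_j²), under the prior π(μ, σ₁²,…,σ_C²) ∝ ∏_j σ_j^{−2} and conditioning on b̂_i = M_i· − M, the parameters μ_1, …, μ_C are a posteriori independent, with μ_j | Y, b̂ ~ t_{N−1}(M_·j, ω_j²) where ω_j² = (1/(N(N−1))) Σ_{i=1}^N (Y'_ij − M_·j)² and Y'_ij = Y_ij − M_i· + M. -/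
open Finset MeasureTheory Set

/-- Subject mean `M_i·`. -/
noncomputable def subjMean (N C : ℕ) (Y : Fin N → Fin C → ℝ) (i : Fin N) : ℝ :=
  (∑ j, Y i j) / C

/-- Condition mean `M_·j`. -/
noncomputable def condMean (N C : ℕ) (Y : Fin N → Fin C → ℝ) (j : Fin C) : ℝ :=
  (∑ i, Y i j) / N

/-- Grand mean `M`. -/
noncomputable def grandMean (N C : ℕ) (Y : Fin N → Fin C → ℝ) : ℝ :=
  (∑ i, ∑ j, Y i j) / (N * C)

/-- Plug-in random-effect estimate `b̂_i = M_i· − M`. -/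
noncomputable def bhat (N C : ℕ) (Y : Fin N → Fin C → ℝ) (i : Fin N) : ℝ :=
  subjMean N C Y i - grandMean N C Y

/-- Standardized score `Y'_ij = Y_ij − M_i· + M`. -/
noncomputable def stdScore (N C : ℕ) (Y : Fin N → Fin C → ℝ) (i : Fin N) (j : Fin C) : ℝ :=
  Y i j - subjMean N C Y i + grandMean N C Y

lemma integrable_aux (S A m : ℝ) (hS : 0 < S) (hA : 2 ≤ A) :
    Integrable (fun t : ℝ => (S + A * (t - m) ^ 2) ^ (-A / 2)) := by
  have hA0 : (0:ℝ) < A := lt_of_lt_of_le two_pos hA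
  set c0 : ℝ := min S 1 with hc0
  have hc0pos : 0 < c0 := lt_min hS one_pos
  have hbase : ∀ t : ℝ, 0 < S + A * (t - m) ^ 2 := fun t =>
    lt_of_lt_of_le hS (by nlinarith [sq_nonneg (t - m)])
  have hcont : Continuous fun t : ℝ => (S + A * (t - m) ^ 2) ^ (-A / 2) := by
    apply Continuous.rpow_const (by continuity)
    exact fun t => Or.inl (ne_of_gt (hbase t))
  have hint : Integrable (fun t : ℝ => c0 ^ (-A / 2) * (1 + (t - m) ^ 2)⁻¹) := by
    have h1 : Integrable (fun t : ℝ => (1 + (t - m) ^ 2)⁻¹) :=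
      integrable_inv_one_add_sq.comp_sub_right m
    exact h1.const_mul _
  refine hint.mono' hcont.aestronglyMeasurable (Filter.Eventually.of_forall fun t => ?_)
  have h1u : (1:ℝ) ≤ 1 + (t - m) ^ 2 := by nlinarith [sq_nonneg (t - m)]
  have hle : c0 * (1 + (t - m) ^ 2) ≤ S + A * (t - m) ^ 2 := by
    have h1 : c0 ≤ S := min_le_left _ _
    have h2 : c0 ≤ 1 := min_le_right _ _
    nlinarith [sq_nonneg (t - m)]
  rw [Real.norm_eq_abs, abs_of_nonneg (Real.rpow_nonneg (hbase t).le _)]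
  calc (S + A * (t - m) ^ 2) ^ (-A / 2)
      ≤ (c0 * (1 + (t - m) ^ 2)) ^ (-A / 2) := by
        apply Real.rpow_le_rpow_of_nonpos (by positivity) hle
        linarith
    _ = c0 ^ (-A / 2) * (1 + (t - m) ^ 2) ^ (-A / 2) :=
        Real.mul_rpow hc0pos.le (by positivity)
    _ ≤ c0 ^ (-A / 2) * (1 + (t - m) ^ 2)⁻¹ := by
        apply mul_le_mul_of_nonneg_left _ (Real.rpow_nonneg hc0pos.le _)
        rw [← Real.rpow_neg_one]
        exact Real.rpow_le_rpow_of_exponent_le h1u (by linarith)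

lemma sum_sq_decomp {N : ℕ} (hN : 0 < N) (x : Fin N → ℝ) (t : ℝ) :
    ∑ i, (x i - t) ^ 2
      = (∑ i, (x i - (∑ i, x i) / N) ^ 2) + N * ((∑ i, x i) / N - t) ^ 2 := by
  set m : ℝ := (∑ i, x i) / N with hm
  have hNne : (N : ℝ) ≠ 0 := Nat.cast_ne_zero.mpr hN.ne'
  have hsum : ∑ i, x i = N * m := by rw [hm]; field_simp
  have hdev : ∑ i, (x i - m) = 0 := by
    rw [Finset.sum_sub_distrib, hsum, Finset.sum_const, card_univ, Fintype.card_fin,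
      nsmul_eq_mul, sub_self]
  have key : ∀ i, (x i - t) ^ 2
      = (x i - m) ^ 2 + ((m - t) ^ 2 + 2 * (m - t) * (x i - m)) := fun i => by ring
  simp only [key, Finset.sum_add_distrib, Finset.sum_const, card_univ, Fintype.card_fin,
    nsmul_eq_mul, ← Finset.mul_sum, hdev, mul_zero, add_zero]

/-- In the heteroscedastic mixed model under the prior `π(μ, σ₁²,…,σ_C²) ∝ ∏_j σ_j^{−2}`,
conditioning on `b̂_i = M_i· − M` and integrating out each `σ_j²` gives the conditional
posterior kernel `g(μ) = ∏_j (Σ_i (Y_ij − μ_j − b̂_i)²)^(−N/2)`. This kernel is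
integrable (a proper posterior) and factorizes into a product of univariate
`t_{N−1}(M_·j, ω_j²)` densities, so that a posteriori `μ_1, …, μ_C` are independent
with `μ_j | Y, b̂ ~ t_{N−1}(M_·j, ω_j²)`, where
`ω_j² = (1/(N(N−1))) Σ_i (Y'_ij − M_·j)²`. -/
theorem heteroscedastic_posterior (N C : ℕ) (hN : 2 ≤ N) (hC : 1 ≤ C)
    (Y : Fin N → Fin C → ℝ)
    (hpos : ∀ j, 0 < ∑ i, (stdScore N C Y i j - condMean N C Y j) ^ 2) :
    let g : (Fin C → ℝ) → ℝ := fun μ =>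
      ∏ j, (∑ i, (Y i j - μ j - bhat N C Y i) ^ 2) ^ (-(N : ℝ) / 2)
    let ω2 : Fin C → ℝ := fun j =>
      (1 / ((N : ℝ) * ((N : ℝ) - 1))) * ∑ i, (stdScore N C Y i j - condMean N C Y j) ^ 2
    Integrable g (volume : Measure (Fin C → ℝ)) ∧
      ∃ c > 0, ∀ μ : Fin C → ℝ,
        g μ = c * ∏ j, (1 + (μ j - condMean N C Y j) ^ 2 / (((N : ℝ) - 1) * ω2 j))
            ^ (-(N : ℝ) / 2) := by
  intro g ω2
  have hN0 : 0 < N := lt_of_lt_of_le two_pos hN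
  have hNne : (N : ℝ) ≠ 0 := Nat.cast_ne_zero.mpr hN0.ne'
  have hCne : (C : ℝ) ≠ 0 := Nat.cast_ne_zero.mpr (Nat.one_le_iff_ne_zero.mp hC)
  have hN1 : (N : ℝ) - 1 ≠ 0 := by
    have : (2:ℝ) ≤ N := by exact_mod_cast hN
    linarith
  set S : Fin C → ℝ := fun j => ∑ i, (stdScore N C Y i j - condMean N C Y j) ^ 2 with hSdef
  -- the residual rewriting
  have hres : ∀ (i : Fin N) (j : Fin C) (t : ℝ),
      Y i j - t - bhat N C Y i = stdScore N C Y i j - t := by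
    intro i j t; simp only [bhat, stdScore]; ring
  -- column sums of stdScore equal column sums of Y
  have hcolsum : ∀ j, ∑ i, stdScore N C Y i j = ∑ i, Y i j := by
    intro j
    have hsubj : ∑ i, subjMean N C Y i = (N : ℝ) * grandMean N C Y := by
      simp only [subjMean, grandMean, ← Finset.sum_div]
      field_simp
    simp only [stdScore, Finset.sum_add_distrib, Finset.sum_sub_distrib, hsubj,
      Finset.sum_const, card_univ, Fintype.card_fin, nsmul_eq_mul]
    ring
  -- key quadratic decomposition
  have hquad : ∀ (j : Fin C) (t : ℝ),
      ∑ i, (Y i j - t - bhat N C Y i) ^ 2 = S j + N * (condMean N C Y j - t) ^ 2 := by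
    intro j t
    have := sum_sq_decomp hN0 (fun i => stdScore N C Y i j) t
    simp only [hres]
    rw [this, hcolsum j]
    rfl
  constructor
  · -- Integrability
    have h1 : Integrable (fun μ : Fin C → ℝ =>
        ∏ j, (S j + N * (μ j - condMean N C Y j) ^ 2) ^ (-(N : ℝ) / 2)) volume := by
      apply Integrable.fintype_prod (f := fun j t =>
        (S j + N * (t - condMean N C Y j) ^ 2) ^ (-(N : ℝ) / 2))
      intro j
      exact integrable_aux (S j) N (condMean N C Y j) (hpos j) (by exact_mod_cast hN)
    refine h1.congr (Filter.Eventually.of_forall fun μ => ?_)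
    apply Finset.prod_congr rfl
    intro j _
    rw [hquad j (μ j)]
    ring_nf
  · -- Factorization
    refine ⟨∏ j, (S j) ^ (-(N : ℝ) / 2), Finset.prod_pos fun j _ =>
      Real.rpow_pos_of_pos (hpos j) _, fun μ => ?_⟩
    rw [← Finset.prod_mul_distrib]
    apply Finset.prod_congr rfl
    intro j _
    have hSj := hpos j
    have hωj : ((N : ℝ) - 1) * ω2 j = S j / N := by
      simp only [ω2]
      field_simp
      ring
    have hfrac : 1 + (μ j - condMean N C Y j) ^ 2 / (((N : ℝ) - 1) * ω2 j)
        = (S j + N * (condMean N C Y j - μ j) ^ 2) / S j := by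
      rw [hωj]
      have hS0 : S j ≠ 0 := ne_of_gt hSj
      field_simp
      ring
    rw [hquad j (μ j), hfrac, Real.div_rpow (by positivity) hSj.le]
    rw [← mul_div_assoc, mul_div_cancel_left₀]
    exact ne_of_gt (Real.rpow_pos_of_pos hSj _)
end

section
/- For a > 0 and integer n ≥ 2, the function μ ↦ (a + n(μ − m)²)^(−n/2) is integrable over ℝ, and after normalization it is the density of a location-scale t-distribution with n − 1 degrees of freedom, location m, and scale a/(n(n−1)). In contrast, for n = 1 the function μ ↦ (a + (μ − m)²)^(−1/2) is not integrable over ℝ. -/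
open MeasureTheory

/-- For `a > 0` and integer `n ≥ 2`, the kernel `μ ↦ (a + n(μ − m)²)^(−n/2)` is
integrable over `ℝ` and is proportional to the density of the location-scale
t-distribution `t_{n−1}(m, a/(n(n−1)))`, whose density is proportional to
`(1 + (μ−m)²/((n−1)·ω²))^(−n/2)` with `ω² = a/(n(n−1))`. In contrast, for `n = 1`
the kernel `μ ↦ (a + (μ − m)²)^(−1/2)` is not integrable over `ℝ`. -/
theorem t_kernel_propriety (a : ℝ) (ha : 0 < a) (m : ℝ) (n : ℕ) (hn : 2 ≤ n) :
    (Integrable (fun μ : ℝ => (a + n * (μ - m) ^ 2) ^ (-(n : ℝ) / 2)) volume ∧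
      ∃ c > 0, ∀ μ : ℝ,
        (a + n * (μ - m) ^ 2) ^ (-(n : ℝ) / 2)
          = c * (1 + (μ - m) ^ 2 / (((n : ℝ) - 1) * (a / ((n : ℝ) * ((n : ℝ) - 1)))))
              ^ (-(n : ℝ) / 2)) ∧
    ¬ Integrable (fun μ : ℝ => (a + (μ - m) ^ 2) ^ (-(1 : ℝ) / 2)) volume := by
  have hn2 : (2 : ℝ) ≤ (n : ℝ) := by exact_mod_cast hn
  have hn0 : (0 : ℝ) < (n : ℝ) := by linarith
  have hbase : ∀ μ : ℝ, 0 < a + (n : ℝ) * (μ - m) ^ 2 := by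
    intro μ; positivity
  refine ⟨⟨?_, ?_⟩, ?_⟩
  · -- integrability for n ≥ 2
    have hcont : Continuous fun μ : ℝ => (a + (n : ℝ) * (μ - m) ^ 2) ^ (-(n : ℝ) / 2) := by
      apply Continuous.rpow_const (by continuity)
      intro x; exact Or.inl (hbase x).ne'
    set C : ℝ := a ^ ((2 - (n : ℝ)) / 2) * (min a 1)⁻¹ with hC
    have hg : Integrable (fun μ : ℝ => C * (1 + (μ - m) ^ 2)⁻¹) volume :=
      (integrable_inv_one_add_sq.comp_sub_right m).const_mul C
    refine hg.mono' hcont.aestronglyMeasurable ?_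
    refine Filter.Eventually.of_forall fun μ => ?_
    have hx := hbase μ
    have hmin : 0 < min a 1 := lt_min ha one_pos
    rw [Real.norm_eq_abs, abs_of_nonneg (Real.rpow_nonneg hx.le _)]
    have hsplit : (a + (n : ℝ) * (μ - m) ^ 2) ^ (-(n : ℝ) / 2)
        = (a + (n : ℝ) * (μ - m) ^ 2) ^ ((2 - (n : ℝ)) / 2)
          * (a + (n : ℝ) * (μ - m) ^ 2)⁻¹ := by
      rw [← Real.rpow_neg_one (a + (n : ℝ) * (μ - m) ^ 2), ← Real.rpow_add hx]
      ring_nf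
    rw [hsplit]
    have h1 : (a + (n : ℝ) * (μ - m) ^ 2) ^ ((2 - (n : ℝ)) / 2) ≤ a ^ ((2 - (n : ℝ)) / 2) :=
      Real.rpow_le_rpow_of_nonpos ha (by nlinarith [sq_nonneg (μ - m)]) (by linarith)
    have h2 : (a + (n : ℝ) * (μ - m) ^ 2)⁻¹ ≤ (min a 1)⁻¹ * (1 + (μ - m) ^ 2)⁻¹ := by
      rw [← mul_inv]
      apply inv_anti₀ (by positivity)
      have h1' : min a 1 ≤ a := min_le_left _ _
      have h2' : min a 1 ≤ 1 := min_le_right _ _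
      nlinarith [sq_nonneg (μ - m)]
    calc (a + (n : ℝ) * (μ - m) ^ 2) ^ ((2 - (n : ℝ)) / 2)
          * (a + (n : ℝ) * (μ - m) ^ 2)⁻¹
        ≤ a ^ ((2 - (n : ℝ)) / 2) * ((min a 1)⁻¹ * (1 + (μ - m) ^ 2)⁻¹) := by
          apply mul_le_mul h1 h2 (by positivity) (by positivity)
      _ = C * (1 + (μ - m) ^ 2)⁻¹ := by rw [hC]; ring
  · -- proportionality
    refine ⟨a ^ (-(n : ℝ) / 2), Real.rpow_pos_of_pos ha _, fun μ => ?_⟩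
    have hn1 : (n : ℝ) - 1 ≠ 0 := by linarith
    have hinner : 1 + (μ - m) ^ 2 / (((n : ℝ) - 1) * (a / ((n : ℝ) * ((n : ℝ) - 1))))
        = (a + (n : ℝ) * (μ - m) ^ 2) / a := by
      field_simp
    rw [hinner, Real.div_rpow (hbase μ).le ha.le]
    have hane : a ^ (-(n : ℝ) / 2) ≠ 0 := (Real.rpow_pos_of_pos ha _).ne'
    field_simp
  · -- non-integrability for n = 1
    intro h
    have h' : Integrable (fun x : ℝ => (a + x ^ 2) ^ (-(1 : ℝ) / 2)) volume := by
      have := h.comp_add_right m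
      simpa using this
    set s := Real.sqrt a with hs
    have hs0 : 0 < s := Real.sqrt_pos.mpr ha
    have hIoi : IntegrableOn (fun x : ℝ => x ^ (-1 : ℝ)) (Set.Ioi s) volume := by
      have hg : IntegrableOn (fun x : ℝ => Real.sqrt 2 * (a + x ^ 2) ^ (-(1 : ℝ) / 2))
          (Set.Ioi s) volume := (h'.const_mul _).integrableOn
      refine hg.mono' ?_ ?_
      · apply ContinuousOn.aestronglyMeasurable ?_ measurableSet_Ioi
        intro x hx
        have hx0 : 0 < x := lt_trans hs0 hx
        exact (Real.continuousAt_rpow_const x _ (Or.inl hx0.ne')).continuousWithinAt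
      · refine (ae_restrict_iff' measurableSet_Ioi).mpr (Filter.Eventually.of_forall fun x hx => ?_)
        simp only [Set.mem_Ioi] at hx
        have hx0 : 0 < x := lt_trans hs0 hx
        have hax : a ≤ x ^ 2 := (Real.lt_sq_of_sqrt_lt hx).le
        rw [Real.norm_eq_abs, abs_of_nonneg (Real.rpow_nonneg hx0.le _)]
        have key : (2 * x ^ 2) ^ (-(1 : ℝ) / 2) ≤ (a + x ^ 2) ^ (-(1 : ℝ) / 2) :=
          Real.rpow_le_rpow_of_nonpos (by positivity) (by nlinarith) (by norm_num)
        have h2x : x ^ (-1 : ℝ) = Real.sqrt 2 * (2 * x ^ 2) ^ (-(1 : ℝ) / 2) := by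
          rw [Real.mul_rpow (by norm_num : (0:ℝ) ≤ 2) (sq_nonneg x),
            ← Real.rpow_natCast x 2, ← Real.rpow_mul hx0.le,
            Real.sqrt_eq_rpow, ← mul_assoc, ← Real.rpow_add (by norm_num : (0:ℝ) < 2)]
          norm_num
        rw [h2x]
        exact mul_le_mul_of_nonneg_left key (Real.sqrt_nonneg 2)
    rw [integrableOn_Ioi_rpow_iff hs0] at hIoi
    linarith
end
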